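/- For natural numbers k, ℓ, the number of pairs (σ, τ) of 0,1 strings of length k+ℓ, each with exactly k ones, such that τ dominates σ, equals the Narayana number N(k+ℓ+1, k+1) = (1/(k+ℓ+1))·C(k+ℓ+1,k)·C(k+ℓ+1,k+1). -/

import Mathlib

/-- Number of ones among the first `j` entries of a 0,1 string of length `n`. -/
def ones (n : ℕ) (σ : Fin n → Bool) (j : ℕ) : ℕ :=
  (Finset.univ.filter fun i : Fin n => (i : ℕ) < j ∧ σ i = true).card

/-- `τ` dominates `σ`: every prefix of `τ` has at least as many ones as that of `σ`. -/
def Dominates (n : ℕ) (τ σ : Fin n → Bool) : Prop :=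
  ∀ j ≤ n, ones n σ j ≤ ones n τ j

lemma ones_zero (n : ℕ) (σ : Fin n → Bool) : ones n σ 0 = 0 := by
  simp [ones]

lemma ones_succ (n : ℕ) (σ : Fin n → Bool) (j : ℕ) (h : j < n) :
    ones n σ (j + 1) = ones n σ j + (if σ ⟨j, h⟩ then 1 else 0) := by
  unfold ones
  have hu : (Finset.univ.filter fun i : Fin n => (i : ℕ) < j + 1 ∧ σ i = true)
      = (Finset.univ.filter fun i : Fin n => (i : ℕ) < j ∧ σ i = true) ∪
        (Finset.univ.filter fun i : Fin n => (i : ℕ) = j ∧ σ i = true) := by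
    ext i
    simp only [Finset.mem_filter, Finset.mem_univ, true_and, Finset.mem_union]
    constructor
    · rintro ⟨h1, h2⟩
      rcases Nat.lt_or_ge (i : ℕ) j with h3 | h3
      · exact Or.inl ⟨h3, h2⟩
      · exact Or.inr ⟨by omega, h2⟩
    · rintro (⟨h1, h2⟩ | ⟨h1, h2⟩) <;> exact ⟨by omega, h2⟩
  rw [hu, Finset.card_union_of_disjoint (by rw [Finset.disjoint_filter]; intro i _ hi hc; omega)]
  congr 1
  by_cases hs : σ ⟨j, h⟩ = true
  · rw [if_pos hs]
    rw [show (Finset.univ.filter fun i : Fin n => (i : ℕ) = j ∧ σ i = true) = {⟨j, h⟩} from ?_]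
    · simp
    · ext i; simp only [Finset.mem_filter, Finset.mem_univ, true_and, Finset.mem_singleton]
      constructor
      · rintro ⟨h1, _⟩; exact Fin.ext h1
      · rintro rfl; exact ⟨rfl, hs⟩
  · rw [if_neg (by simpa using hs), Finset.card_eq_zero.mpr]
    ext i; simp only [Finset.mem_filter, Finset.mem_univ, true_and, Finset.notMem_empty,
      iff_false, not_and]
    intro h1; rw [show i = ⟨j, h⟩ from Fin.ext h1]; simpa using hs

lemma ones_succ_ge (n : ℕ) (σ : Fin n → Bool) (j : ℕ) (h : n ≤ j) :
    ones n σ (j + 1) = ones n σ j := by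
  unfold ones; congr 1; ext i
  simp only [Finset.mem_filter, Finset.mem_univ, true_and, and_congr_left_iff]
  intro _; have := i.isLt; omega

lemma ones_stable (n : ℕ) (σ : Fin n → Bool) (j : ℕ) (h : n ≤ j) :
    ones n σ j = ones n σ n := by
  induction j with
  | zero => have h0 : n = 0 := by omega
            subst h0
            rfl
  | succ m ih =>
    rcases Nat.eq_or_lt_of_le h with h' | h'
    · rw [← h']
    · rw [ones_succ_ge n σ m (by omega), ih (by omega)]

lemma ones_le_succ (n : ℕ) (σ : Fin n → Bool) (j : ℕ) :
    ones n σ j ≤ ones n σ (j + 1) ∧ ones n σ (j + 1) ≤ ones n σ j + 1 := by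
  rcases Nat.lt_or_ge j n with h | h
  · rw [ones_succ n σ j h]; split <;> omega
  · rw [ones_succ_ge n σ j h]; omega

/-- Splice: take `σ` on positions `< j0` and `τ` on positions `≥ j0`. -/
def splice (n j0 : ℕ) (σ τ : Fin n → Bool) : Fin n → Bool :=
  fun i => if (i : ℕ) < j0 then σ i else τ i

lemma ones_splice_le (n j0 : ℕ) (σ τ : Fin n → Bool) (j : ℕ) (h : j ≤ j0) :
    ones n (splice n j0 σ τ) j = ones n σ j := by
  unfold ones; congr 1
  apply Finset.filter_congr
  intro i _
  simp only [splice]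
  constructor
  · rintro ⟨h1, h2⟩; rw [if_pos (by omega)] at h2; exact ⟨h1, h2⟩
  · rintro ⟨h1, h2⟩; exact ⟨h1, by rw [if_pos (by omega)]; exact h2⟩

lemma ones_splice_ge (n j0 : ℕ) (σ τ : Fin n → Bool) (j : ℕ) (h : j0 ≤ j) :
    ones n (splice n j0 σ τ) j + ones n τ j0 = ones n τ j + ones n σ j0 := by
  induction j with
  | zero =>
    have h0 : j0 = 0 := by omega
    subst h0
    rw [ones_splice_le n 0 σ τ 0 le_rfl]; ring
  | succ m ih =>
    rcases Nat.eq_or_lt_of_le h with h' | h'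
    · rw [← h', ones_splice_le n j0 σ τ j0 le_rfl]; ring
    · have hm : j0 ≤ m := by omega
      rcases Nat.lt_or_ge m n with hn | hn
      · rw [ones_succ n _ m hn, ones_succ n τ m hn]
        have : splice n j0 σ τ ⟨m, hn⟩ = τ ⟨m, hn⟩ := by
          simp only [splice]; rw [if_neg (by simp; omega)]
        rw [this]
        omega
      · rw [ones_succ_ge n _ m hn, ones_succ_ge n τ m hn]; exact ih hm

lemma splice_splice (n j0 : ℕ) (σ τ : Fin n → Bool) :
    splice n j0 (splice n j0 σ τ) (splice n j0 τ σ) = σ := by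
  funext i
  simp only [splice]
  split <;> simp_all

lemma viol_iff (n : ℕ) (σ τ : Fin n → Bool) :
    (∃ j, ones n τ j < ones n σ j) ↔ ¬ Dominates n τ σ := by
  constructor
  · rintro ⟨j, hj⟩ hd
    rcases Nat.lt_or_ge n j with h | h
    · rw [ones_stable n τ j (by omega), ones_stable n σ j (by omega)] at hj
      exact absurd (hd n le_rfl) (by omega)
    · exact absurd (hd j h) (by omega)
  · intro hd
    unfold Dominates at hd
    push_neg at hd
    obtain ⟨j, _, hj⟩ := hd
    exact ⟨j, hj⟩

section FV
variable {n : ℕ} {σ τ : Fin n → Bool} (hv : ∃ j, ones n τ j < ones n σ j)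

lemma fv_le : Nat.find hv ≤ n := by
  by_contra h
  have hP := Nat.find_spec hv
  rw [ones_stable n τ _ (by omega), ones_stable n σ _ (by omega)] at hP
  exact absurd (Nat.find_min' hv hP) (by omega)

lemma fv_eq : ones n σ (Nat.find hv) = ones n τ (Nat.find hv) + 1 := by
  have hP := Nat.find_spec hv
  have hpos : 0 < Nat.find hv := by
    rcases Nat.eq_zero_or_pos (Nat.find hv) with h | h
    · rw [h, ones_zero, ones_zero] at hP; omega
    · exact h
  obtain ⟨m, hm⟩ : ∃ m, Nat.find hv = m + 1 := ⟨Nat.find hv - 1, by omega⟩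
  have hnot : ¬ ones n τ m < ones n σ m := Nat.find_min hv (by omega)
  have h1 := ones_le_succ n σ m
  have h2 := ones_le_succ n τ m
  rw [hm] at hP ⊢
  omega

lemma fv_ones_fst : ones n (splice n (Nat.find hv) σ τ) n = ones n τ n + 1 := by
  have := ones_splice_ge n (Nat.find hv) σ τ n (fv_le hv)
  have := fv_eq hv
  omega

lemma fv_ones_snd : ones n (splice n (Nat.find hv) τ σ) n + 1 = ones n σ n := by
  have := ones_splice_ge n (Nat.find hv) τ σ n (fv_le hv)
  have := fv_eq hv
  omega

lemma fv_swap_viol : ∃ j, ones n (splice n (Nat.find hv) τ σ) j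
    < ones n (splice n (Nat.find hv) σ τ) j := by
  refine ⟨Nat.find hv, ?_⟩
  rw [ones_splice_le _ _ _ _ _ le_rfl, ones_splice_le _ _ _ _ _ le_rfl]
  exact Nat.find_spec hv

lemma fv_swap_eq (hv' : ∃ j, ones n (splice n (Nat.find hv) τ σ) j
    < ones n (splice n (Nat.find hv) σ τ) j) : Nat.find hv' = Nat.find hv := by
  have h1 : Nat.find hv' ≤ Nat.find hv := by
    apply Nat.find_min' _
    rw [ones_splice_le _ _ _ _ _ le_rfl, ones_splice_le _ _ _ _ _ le_rfl]
    exact Nat.find_spec hv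
  refine le_antisymm h1 ?_
  apply Nat.find_min' _
  have hspec := Nat.find_spec hv'
  rwa [ones_splice_le _ _ _ _ _ h1, ones_splice_le _ _ _ _ _ h1] at hspec

end FV


instance (n : ℕ) (τ σ : Fin n → Bool) : Decidable (Dominates n τ σ) :=
  Nat.decidableBallLE n _

instance (n : ℕ) (σ τ : Fin n → Bool) : Decidable (∃ j, ones n τ j < ones n σ j) :=
  decidable_of_iff _ (viol_iff n σ τ).symm

def swapfun (n : ℕ) (p : (Fin n → Bool) × (Fin n → Bool)) : (Fin n → Bool) × (Fin n → Bool) :=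
  if h : ∃ j, ones n p.2 j < ones n p.1 j then
    (splice n (Nat.find h) p.1 p.2, splice n (Nat.find h) p.2 p.1)
  else p

lemma swapfun_eq {n : ℕ} {p : (Fin n → Bool) × (Fin n → Bool)}
    (h : ∃ j, ones n p.2 j < ones n p.1 j) :
    swapfun n p = (splice n (Nat.find h) p.1 p.2, splice n (Nat.find h) p.2 p.1) := by
  unfold swapfun
  rw [dif_pos h]

lemma swapfun_viol {n : ℕ} {p : (Fin n → Bool) × (Fin n → Bool)}
    (h : ∃ j, ones n p.2 j < ones n p.1 j) :
    ∃ j, ones n (swapfun n p).2 j < ones n (swapfun n p).1 j := by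
  rw [swapfun_eq h]
  exact fv_swap_viol h

lemma swapfun_fst {n : ℕ} {p : (Fin n → Bool) × (Fin n → Bool)}
    (h : ∃ j, ones n p.2 j < ones n p.1 j) :
    ones n (swapfun n p).1 n = ones n p.2 n + 1 := by
  rw [swapfun_eq h]
  exact fv_ones_fst h

lemma swapfun_snd {n : ℕ} {p : (Fin n → Bool) × (Fin n → Bool)}
    (h : ∃ j, ones n p.2 j < ones n p.1 j) :
    ones n (swapfun n p).2 n + 1 = ones n p.1 n := by
  rw [swapfun_eq h]
  exact fv_ones_snd h

lemma swapfun_invol {n : ℕ} {p : (Fin n → Bool) × (Fin n → Bool)}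
    (h : ∃ j, ones n p.2 j < ones n p.1 j) :
    swapfun n (swapfun n p) = p := by
  obtain ⟨σ, τ⟩ := p
  have h2 := swapfun_viol h
  rw [swapfun_eq h] at h2
  simp only at h2
  rw [swapfun_eq h, swapfun_eq h2]
  simp only
  rw [fv_swap_eq h h2]
  exact Prod.ext (splice_splice n (Nat.find h) σ τ) (splice_splice n (Nat.find h) τ σ)


def swapEquiv (n k : ℕ) :
    {p : (Fin n → Bool) × (Fin n → Bool) //
        ones n p.1 n = k ∧ ones n p.2 n = k ∧ ¬ Dominates n p.2 p.1} ≃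
    {p : (Fin n → Bool) × (Fin n → Bool) //
        ones n p.1 n = k + 1 ∧ ones n p.2 n + 1 = k} where
  toFun x := ⟨swapfun n x.1, by
    have hv : ∃ j, ones n x.1.2 j < ones n x.1.1 j := (viol_iff n x.1.1 x.1.2).mpr x.2.2.2
    have h1 := swapfun_fst hv
    have h2 := swapfun_snd hv
    obtain ⟨hw1, hw2, _⟩ := x.2
    omega⟩
  invFun y := ⟨swapfun n y.1, by
    have hv : ∃ j, ones n y.1.2 j < ones n y.1.1 j := ⟨n, by omega⟩
    have h1 := swapfun_fst hv
    have h2 := swapfun_snd hv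
    obtain ⟨hw1, hw2⟩ := y.2
    refine ⟨by omega, by omega, ?_⟩
    exact (viol_iff n _ _).mp (swapfun_viol hv)⟩
  left_inv x := by
    apply Subtype.ext
    exact swapfun_invol ((viol_iff n x.1.1 x.1.2).mpr x.2.2.2)
  right_inv y := by
    apply Subtype.ext
    exact swapfun_invol ⟨n, by omega⟩

lemma ones_top (n : ℕ) (σ : Fin n → Bool) :
    ones n σ n = (Finset.univ.filter fun i => σ i = true).card := by
  unfold ones; congr 1
  apply Finset.filter_congr
  intro i _
  simp [i.isLt]

def weightEquiv (n m : ℕ) :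
    {σ : Fin n → Bool // ones n σ n = m} ≃ {s : Finset (Fin n) // s.card = m} where
  toFun x := ⟨Finset.univ.filter fun i => x.1 i = true, by rw [← ones_top]; exact x.2⟩
  invFun s := ⟨fun i => decide (i ∈ s.1), by
    rw [ones_top]
    have : (Finset.univ.filter fun i => decide (i ∈ s.1) = true) = s.1 := by
      ext i; simp
    rw [this]; exact s.2⟩
  left_inv x := by
    apply Subtype.ext
    funext i
    simp
  right_inv s := by
    apply Subtype.ext
    ext i
    simp

lemma count_weight (n m : ℕ) :
    Nat.card {σ : Fin n → Bool // ones n σ n = m} = n.choose m := by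
  rw [Nat.card_congr (weightEquiv n m), Nat.card_eq_fintype_card,
    Fintype.card_finset_len, Fintype.card_fin]

lemma count_pairs (n : ℕ) (P Q : (Fin n → Bool) → Prop) :
    Nat.card {p : (Fin n → Bool) × (Fin n → Bool) // P p.1 ∧ Q p.2}
      = Nat.card {σ : Fin n → Bool // P σ} * Nat.card {σ : Fin n → Bool // Q σ} := by
  rw [Nat.card_congr (Equiv.subtypeProdEquivProd), Nat.card_prod]

lemma count_split (n k : ℕ) :
    Nat.card {p : (Fin n → Bool) × (Fin n → Bool) //
        ones n p.1 n = k ∧ ones n p.2 n = k ∧ Dominates n p.2 p.1}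
      + Nat.card {p : (Fin n → Bool) × (Fin n → Bool) //
        ones n p.1 n = k ∧ ones n p.2 n = k ∧ ¬ Dominates n p.2 p.1}
      = n.choose k * n.choose k := by
  classical
  have e1 : ∀ (q : ((Fin n → Bool) × (Fin n → Bool)) → Prop),
      Nat.card {p : (Fin n → Bool) × (Fin n → Bool) //
          ones n p.1 n = k ∧ ones n p.2 n = k ∧ q p}
      = Nat.card {x : {p : (Fin n → Bool) × (Fin n → Bool) //
          ones n p.1 n = k ∧ ones n p.2 n = k} // q x.1} := by
    intro q
    exact Nat.card_congr ((Equiv.subtypeEquivRight fun p => by tauto).trans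
      (Equiv.subtypeSubtypeEquivSubtypeInter
        (fun p => ones n p.1 n = k ∧ ones n p.2 n = k) q).symm)
  rw [e1, e1, ← Nat.card_sum, Nat.card_congr (Equiv.sumCompl _),
    count_pairs n (fun σ => ones n σ n = k) (fun σ => ones n σ n = k),
    count_weight n k]

lemma narayana_identity (K L : ℕ) :
    (K + L + 2) * ((K + L + 1).choose (K + 1) * (K + L + 1).choose (K + 1))
      = (K + L + 2).choose (K + 1) * (K + L + 2).choose (K + 2)
        + (K + L + 2) * ((K + L + 1).choose (K + 2) * (K + L + 1).choose K) := by
  set m := K + L + 1 with hm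
  set a := m.choose K with ha
  set b := m.choose (K + 1) with hb
  set c := m.choose (K + 2) with hc
  have r1 : b * (K + 1) = a * (L + 1) := by
    have := Nat.choose_succ_right_eq m K
    rw [show m - K = L + 1 by omega] at this
    exact this
  have r2 : c * (K + 2) = b * L := by
    have := Nat.choose_succ_right_eq m (K + 1)
    rw [show m - (K + 1) = L by omega] at this
    exact this
  have p1 : (m + 1).choose (K + 1) = a + b := Nat.choose_succ_succ m K
  have p2 : (m + 1).choose (K + 2) = b + c := Nat.choose_succ_succ m (K + 1)
  rw [show K + L + 2 = m + 1 by omega, p1, p2]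
  apply Nat.eq_of_mul_eq_mul_right (show 0 < (K + 2) * (L + 1) by positivity)
  have e3 : (a * (L + 1)) * (c * (K + 2)) = (b * (K + 1)) * (b * L) := by rw [r1, r2]
  have e4 : (b * (K + 1)) * (b * (K + 2)) = (a * (L + 1)) * (b * (K + 2)) := by rw [r1]
  have e5 : (c * (K + 2)) * (b * (L + 1)) = (b * L) * (b * (L + 1)) := by rw [r2]
  zify at e3 e4 e5 ⊢
  have hm' : (m : ℤ) = K + L + 1 := by rw [hm]; push_cast; ring
  rw [hm']
  nlinarith [e3, e4, e5]

lemma ones_eq_zero {n : ℕ} {σ : Fin n → Bool} (h : ones n σ n = 0) :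
    σ = fun _ => false := by
  rw [ones_top, Finset.card_eq_zero] at h
  funext i
  by_contra hc
  have : i ∈ (Finset.univ.filter fun i => σ i = true) := by
    simp only [Finset.mem_filter, Finset.mem_univ, true_and]
    simpa using hc
  rw [h] at this
  exact absurd this (Finset.notMem_empty i)

lemma ones_false (n j : ℕ) : ones n (fun _ => false) j = 0 := by
  simp [ones]

theorem dominated_pairs_narayana (k ℓ : ℕ) :
    (k + ℓ + 1) *
        Nat.card {p : (Fin (k + ℓ) → Bool) × (Fin (k + ℓ) → Bool) //
          ones (k + ℓ) p.1 (k + ℓ) = k ∧ ones (k + ℓ) p.2 (k + ℓ) = k ∧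
            Dominates (k + ℓ) p.2 p.1}
      = (k + ℓ + 1).choose k * (k + ℓ + 1).choose (k + 1) := by
  rcases k with _ | K
  · -- k = 0
    have hcard : Nat.card {p : (Fin (0 + ℓ) → Bool) × (Fin (0 + ℓ) → Bool) //
        ones (0 + ℓ) p.1 (0 + ℓ) = 0 ∧ ones (0 + ℓ) p.2 (0 + ℓ) = 0 ∧
          Dominates (0 + ℓ) p.2 p.1} = 1 := by
      rw [Nat.card_eq_one_iff_unique]
      constructor
      · constructor
        intro x y
        apply Subtype.ext
        have hx1 := ones_eq_zero x.2.1
        have hx2 := ones_eq_zero x.2.2.1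
        have hy1 := ones_eq_zero y.2.1
        have hy2 := ones_eq_zero y.2.2.1
        exact Prod.ext (hx1.trans hy1.symm) (hx2.trans hy2.symm)
      · refine ⟨⟨(fun _ => false, fun _ => false), ?_, ?_, ?_⟩⟩
        · exact ones_false _ _
        · exact ones_false _ _
        · intro j _
          exact le_rfl
    rw [hcard, Nat.choose_zero_right, Nat.choose_one_right]
    omega
  · -- k = K + 1
    have hsplit := count_split (K + 1 + ℓ) (K + 1)
    have hswap : Nat.card {p : (Fin (K + 1 + ℓ) → Bool) × (Fin (K + 1 + ℓ) → Bool) //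
          ones (K + 1 + ℓ) p.1 (K + 1 + ℓ) = K + 1 ∧ ones (K + 1 + ℓ) p.2 (K + 1 + ℓ) = K + 1 ∧
            ¬ Dominates (K + 1 + ℓ) p.2 p.1}
        = (K + 1 + ℓ).choose (K + 1 + 1) * (K + 1 + ℓ).choose K := by
      rw [Nat.card_congr (swapEquiv (K + 1 + ℓ) (K + 1)),
        count_pairs (K + 1 + ℓ) (fun σ => ones (K + 1 + ℓ) σ (K + 1 + ℓ) = K + 1 + 1)
          (fun σ => ones (K + 1 + ℓ) σ (K + 1 + ℓ) + 1 = K + 1),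
        count_weight]
      congr 1
      rw [Nat.card_congr (Equiv.subtypeEquivRight
        (fun σ => show _ ↔ ones (K + 1 + ℓ) σ (K + 1 + ℓ) = K from by omega)),
        count_weight]
    have id := narayana_identity K ℓ
    rw [show K + ℓ + 2 = K + 1 + ℓ + 1 from by omega,
      show K + ℓ + 1 = K + 1 + ℓ from by omega,
      show K + 2 = K + 1 + 1 from by omega] at id
    rw [← hswap, ← hsplit, Nat.mul_add] at id
    exact Nat.add_right_cancel id
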